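/- Let b be a nonzero real number and let ε : ℝ → ℂ be a continuous function with ε(t) → 0 as t → +∞. Then for every δ > 0 there exists R > 0 such that for every r ≥ R there exist t ∈ (r − δ, r + δ) and ρ > 0 with e^{ibt} + ε(t) = ρ·e^{ibr}. -/

import Mathlib

open Filter

/-- Abstract form of Lemma 4.4: if `ε(t) → 0` as `t → ∞` and `b ≠ 0`, then for every
`δ > 0` and every sufficiently large `r`, the phase `b·r` is attained by the argument
of `e^{ibt} + ε(t)` for some `t` within `δ` of `r`, i.e. `e^{ibt} + ε(t) = ρ·e^{ibr}`
for some `t ∈ (r - δ, r + δ)` and some `ρ > 0`. -/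
theorem arg_attained_near
    (b : ℝ) (hb : b ≠ 0) (ε : ℝ → ℂ) (hcont : Continuous ε)
    (hlim : Tendsto ε atTop (nhds 0)) :
    ∀ δ : ℝ, 0 < δ → ∃ R : ℝ, 0 < R ∧ ∀ r : ℝ, R ≤ r →
      ∃ t ∈ Set.Ioo (r - δ) (r + δ), ∃ ρ : ℝ, 0 < ρ ∧
        Complex.exp (Complex.I * (b * t)) + ε t = (ρ : ℂ) * Complex.exp (Complex.I * (b * r)) := by
  intro δ hδ
  have hπ : 0 < Real.pi := Real.pi_pos
  set B := |b| with hBdef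
  have hB0 : 0 < B := abs_pos.mpr hb
  set δ' : ℝ := min (δ / 2) (Real.pi / (4 * B)) with hδ'def
  have hδ'0 : 0 < δ' := lt_min (by linarith) (by positivity)
  have hδ'δ : δ' < δ := lt_of_le_of_lt (min_le_left _ _) (by linarith)
  have hBδ' : B * δ' ≤ Real.pi / 4 := by
    have h1 : δ' ≤ Real.pi / (4 * B) := min_le_right _ _
    have := mul_le_mul_of_nonneg_left h1 hB0.le
    calc B * δ' ≤ B * (Real.pi / (4 * B)) := this
      _ = Real.pi / 4 := by field_simp
  have hBδ'0 : 0 < B * δ' := mul_pos hB0 hδ'0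
  set s : ℝ := Real.sin (B * δ') with hsdef
  have hs0 : 0 < s := Real.sin_pos_of_pos_of_lt_pi hBδ'0 (by linarith)
  have hs1 : s ≤ 1 := Real.sin_le_one _
  -- sin (b*δ') equals ±s
  have hsinb : Real.sin (b * δ') = s ∨ Real.sin (b * δ') = -s := by
    rcases abs_cases b with ⟨h1, _⟩ | ⟨h1, _⟩
    · left
      rw [hsdef, hBdef, h1]
    · right
      have hB' : B * δ' = -(b * δ') := by rw [hBdef, h1]; ring
      rw [hsdef, hB', Real.sin_neg]
      ring
  -- choose R₀ so that ‖ε t‖ < s/2 for t ≥ R₀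
  obtain ⟨R₀, hR₀⟩ := (Metric.tendsto_atTop.mp hlim (s / 2) (by positivity))
  refine ⟨max 1 (R₀ + δ'), lt_of_lt_of_le one_pos (le_max_left _ _), ?_⟩
  intro r hr
  have hrR₀ : R₀ + δ' ≤ r := le_trans (le_max_right _ _) hr
  have hsmall : ∀ t : ℝ, r - δ' ≤ t → ‖ε t‖ < s / 2 := by
    intro t ht
    have : R₀ ≤ t := by linarith
    simpa [Complex.dist_eq] using hR₀ t this
  -- the rotated function
  set w : ℂ := Complex.exp (((-(b * r) : ℝ) : ℂ) * Complex.I) with hwdef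
  have hwabs : ‖w‖ = 1 := Complex.norm_exp_ofReal_mul_I _
  set f : ℝ → ℂ := fun t => (Complex.exp (Complex.I * (b * t)) + ε t) * w with hfdef
  have hexp : ∀ t : ℝ, Complex.exp (Complex.I * (b * t)) * w
      = Complex.exp (((b * t - b * r : ℝ) : ℂ) * Complex.I) := by
    intro t
    rw [hwdef, ← Complex.exp_add]
    congr 1
    push_cast
    ring
  have hre : ∀ t : ℝ, (f t).re = Real.cos (b * t - b * r) + (ε t * w).re := by
    intro t
    simp only [hfdef, add_mul, Complex.add_re, hexp t, Complex.exp_ofReal_mul_I_re]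
  have him : ∀ t : ℝ, (f t).im = Real.sin (b * t - b * r) + (ε t * w).im := by
    intro t
    simp only [hfdef, add_mul, Complex.add_im, hexp t, Complex.exp_ofReal_mul_I_im]
  have hεw : ∀ t : ℝ, r - δ' ≤ t → |(ε t * w).re| < s / 2 ∧ |(ε t * w).im| < s / 2 := by
    intro t ht
    have h1 : ‖ε t * w‖ < s / 2 := by
      rw [norm_mul, hwabs, mul_one]; exact hsmall t ht
    exact ⟨lt_of_le_of_lt (Complex.abs_re_le_norm _) h1,
      lt_of_le_of_lt (Complex.abs_im_le_norm _) h1⟩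
  -- IVT for the imaginary part on [r-δ', r+δ']
  have hinner : Continuous fun t : ℝ => Complex.I * ((b : ℂ) * (t : ℂ)) :=
    continuous_const.mul (continuous_const.mul Complex.continuous_ofReal)
  have hfc : Continuous f := by
    rw [hfdef]
    exact ((Complex.continuous_exp.comp hinner).add hcont).mul continuous_const
  have hgc : ContinuousOn (fun t => (f t).im) (Set.uIcc (r - δ') (r + δ')) :=
    (Complex.continuous_im.comp hfc).continuousOn
  have hmem : (0 : ℝ) ∈ Set.uIcc ((fun t => (f t).im) (r - δ')) ((fun t => (f t).im) (r + δ')) := by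
    have h1 := (hεw (r - δ') le_rfl).2
    have h2 := (hεw (r + δ') (by linarith)).2
    have e1 : b * (r - δ') - b * r = -(b * δ') := by ring
    have e2 : b * (r + δ') - b * r = b * δ' := by ring
    rw [Set.mem_uIcc]
    simp only [him, e1, e2, Real.sin_neg]
    have h1a := (abs_le.mp h1.le).1
    have h1b := (abs_le.mp h1.le).2
    have h2a := (abs_le.mp h2.le).1
    have h2b := (abs_le.mp h2.le).2
    rcases hsinb with hx | hx
    · left
      rw [hx]
      constructor <;> linarith
    · right
      rw [hx]
      constructor <;> linarith
  obtain ⟨t₀, ht₀mem, ht₀⟩ := intermediate_value_uIcc hgc hmem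
  rw [Set.uIcc_of_le (by linarith)] at ht₀mem
  obtain ⟨ht₀1, ht₀2⟩ := ht₀mem
  -- positivity of the real part at t₀
  have hcosb : Real.cos (b * t₀ - b * r) ≥ Real.sqrt 2 / 2 := by
    have habs : |b * t₀ - b * r| ≤ B * δ' := by
      have : b * t₀ - b * r = b * (t₀ - r) := by ring
      rw [this, abs_mul, ← hBdef]
      have : |t₀ - r| ≤ δ' := abs_le.mpr ⟨by linarith, by linarith⟩
      exact mul_le_mul_of_nonneg_left this (abs_nonneg b)
    calc Real.cos (b * t₀ - b * r) = Real.cos |b * t₀ - b * r| := (Real.cos_abs _).symm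
      _ ≥ Real.cos (Real.pi / 4) := Real.cos_le_cos_of_nonneg_of_le_pi (abs_nonneg _)
          (by linarith) (by linarith)
      _ = Real.sqrt 2 / 2 := Real.cos_pi_div_four
  have hsqrt2 : (1 : ℝ) < Real.sqrt 2 := by
    have := Real.lt_sqrt (x := 1) (y := 2) zero_le_one
    rw [this]; norm_num
  have hrepos : 0 < (f t₀).re := by
    have h1 := (hεw t₀ ht₀1).1
    rw [hre]
    have := (abs_le.mp h1.le).1
    have : -(s/2) ≤ (ε t₀ * w).re := this
    nlinarith
  refine ⟨t₀, ⟨by linarith, by linarith⟩, (f t₀).re, hrepos, ?_⟩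
  have hf0 : f t₀ = ((f t₀).re : ℂ) := by
    apply Complex.ext
    · simp
    · simp [ht₀]
  have hw1 : w * Complex.exp (Complex.I * (b * r)) = 1 := by
    rw [hwdef, ← Complex.exp_add, ← Complex.exp_zero]
    congr 1
    push_cast
    ring
  calc Complex.exp (Complex.I * (b * t₀)) + ε t₀
      = (Complex.exp (Complex.I * (b * t₀)) + ε t₀) * (w * Complex.exp (Complex.I * (b * r))) := by
        rw [hw1, mul_one]
    _ = f t₀ * Complex.exp (Complex.I * (b * r)) := by rw [hfdef]; ring
    _ = ((f t₀).re : ℂ) * Complex.exp (Complex.I * (b * r)) := by rw [← hf0]
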